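/- Let n ≥ 1, b ≥ 2 be integers and let X_1, …, X_b be independent (not necessarily identically distributed) random variables with values in {1,…,n}. Let C := b − |{X_1,…,X_b}| be the number of collisions, and suppose E[C] > 0. Then there exists a probability measure ν on ℤ_{≥0} × ℤ_{≥0} whose first marginal is the law of C, whose second marginal is the size-biased law of C (the law assigning probability k·P(C = k)/E[C] to each k), and which is supported on the set {(x, y) : y − x ∈ {−1, 0, 1, 2}}. -/

import Mathlib

open MeasureTheory ProbabilityTheory Filter Topology
open scoped ENNReal NNReal

set_option linter.unusedSectionVars false
set_option linter.unusedVariables false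
set_option maxHeartbeats 1000000

namespace SBAux


/-- Sum of a product over a pi type factorizes. -/
lemma split : ∀ (k : ℕ) (c : Fin k → ℕ → ℝ≥0∞),
    ∑' x : Fin k → ℕ, ∏ j, c j (x j) = ∏ j, ∑' v, c j v := by
  intro k
  induction k with
  | zero =>
      intro c
      rw [Finset.univ_eq_empty, Finset.prod_empty,
        tsum_eq_single (fun (j : Fin 0) => 0) (by
          intro x hx; exact absurd (funext fun j => j.elim0) hx)]
      exact Finset.prod_empty
  | succ n ih =>
      intro c
      let e := (Fin.consEquiv (fun _ : Fin (n+1) => ℕ))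
      rw [← Equiv.tsum_eq e (fun x => ∏ j, c j (x j))]
      have hz : ∀ z : ℕ × (Fin n → ℕ),
          (∏ j, c j ((e z) j)) = c 0 z.1 * ∏ j : Fin n, c j.succ (z.2 j) := by
        intro z
        have : e z = Fin.cons z.1 z.2 := rfl
        rw [this, Fin.prod_univ_succ, Fin.cons_zero]
        simp only [Fin.cons_succ]
      calc ∑' z : ℕ × (Fin n → ℕ), ∏ j, c j ((e z) j)
          = ∑' (v : ℕ) (w : Fin n → ℕ), c 0 v * ∏ j : Fin n, c j.succ (w j) := by
            simp_rw [hz]; exact ENNReal.tsum_prod'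
        _ = (∑' v, c 0 v) * ∏ j : Fin n, ∑' v, c j.succ v := by
            simp_rw [ENNReal.tsum_mul_left]
            rw [ENNReal.tsum_mul_right, ih (fun j => c j.succ)]
        _ = ∏ j, ∑' v, c j v := by rw [Fin.prod_univ_succ]



variable {b : ℕ}

noncomputable def Pp (p : Fin b → ℕ → ℝ≥0∞) (x : Fin b → ℕ) : ℝ≥0∞ := ∏ i, p i (x i)

def fcol (x : Fin b → ℕ) : ℕ := b - (Finset.univ.image x).card

noncomputable def phi (p : Fin b → ℕ → ℝ≥0∞) (a : ℕ) (l : Fin b) : ℝ≥0∞ :=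
  p l a * ∏ j ∈ Finset.Iio l, (1 - p j a)

noncomputable def trm (p : Fin b → ℕ → ℝ≥0∞) (i : Fin b) (a : ℕ) (l : Fin b)
    (x y : Fin b → ℕ) : ℝ≥0∞ :=
  p i a * phi p a l * Pp p x *
    ((if (∀ j, l ≤ j → j < i → x j ≠ a) ∧ y = Function.update (Function.update x i a) l a
        then 1 else 0)
     + (if (∃ j, l ≤ j ∧ j < i ∧ x j = a) ∧ y = Function.update x i a then 1 else 0))

noncomputable def Lam (p : Fin b → ℕ → ℝ≥0∞) (x y : Fin b → ℕ) : ℝ≥0∞ :=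
  ∑ i, ∑' a : ℕ, ∑ l ∈ Finset.Iio i, trm p i a l x y

section scalars
variable {p : Fin b → ℕ → ℝ≥0∞} (hp : ∀ i, ∑' v, p i v = 1)
include hp

lemma pone (i : Fin b) (a : ℕ) : p i a ≤ 1 := by
  rw [← hp i]; exact ENNReal.le_tsum a

lemma ptop (i : Fin b) (a : ℕ) : p i a ≠ ⊤ := (lt_of_le_of_lt (pone hp i a) (by simp)).ne

lemma sumne (j : Fin b) (a : ℕ) : ∑' v, (if v = a then 0 else p j v) = 1 - p j a := by
  have h := ENNReal.tsum_eq_add_tsum_ite (f := p j) a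
  rw [hp j] at h
  refine ENNReal.eq_sub_of_add_eq (ptop hp j a) ?_
  rw [add_comm]
  convert h.symm using 3
  funext v
  congr 1

lemma prod_one_sub_le_one (a : ℕ) (s : Finset (Fin b)) : (∏ j ∈ s, (1 - p j a)) ≤ 1 :=
  Finset.prod_le_one (fun _ _ => zero_le) (fun _ _ => tsub_le_self)

end scalars

/-- scalar arithmetic lemma in ℝ≥0∞ -/
lemma sc1 {g Q : ℝ≥0∞} (hg : g ≤ 1) (hQ : Q ≤ 1) : g * Q + (1 - Q) = 1 - (1 - g) * Q := by
  have hne : (1 - g) * Q ≠ ⊤ := (lt_of_le_of_lt (mul_le_one' tsub_le_self hQ) (by simp)).ne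
  refine (ENNReal.add_left_inj hne).mp ?_
  rw [tsub_add_cancel_of_le (mul_le_one' tsub_le_self hQ)]
  calc g * Q + (1 - Q) + (1 - g) * Q = (g * Q + (1 - g) * Q) + (1 - Q) := by ring
    _ = (g + (1 - g)) * Q + (1 - Q) := by rw [add_mul]
    _ = Q + (1 - Q) := by rw [add_tsub_cancel_of_le hg, one_mul]
    _ = 1 := add_tsub_cancel_of_le hQ

def St (t : ℕ) : Finset (Fin b) := Finset.univ.filter (fun j : Fin b => (j : ℕ) < t)

lemma Iio_eq_St (l : Fin b) : Finset.Iio l = (St l.val : Finset (Fin b)) := by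
  ext j; simp only [Finset.mem_Iio, St, Finset.mem_filter, Finset.mem_univ, true_and, Fin.lt_def]

lemma St_zero : (St 0 : Finset (Fin b)) = ∅ := by ext j; simp [St]

lemma St_succ_lt {t : ℕ} (h : t < b) : (St (t+1) : Finset (Fin b)) = insert ⟨t, h⟩ (St t) := by
  ext j
  simp only [St, Finset.mem_filter, Finset.mem_univ, true_and, Finset.mem_insert]
  constructor
  · intro hj
    rcases Nat.lt_succ_iff_lt_or_eq.mp hj with h' | h'
    · exact Or.inr h'
    · exact Or.inl (Fin.ext h')
  · rintro (rfl | hj)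
    · exact Nat.lt_succ_self t
    · exact Nat.lt_succ_of_lt hj

lemma St_succ_ge {t : ℕ} (h : ¬ t < b) : (St (t+1) : Finset (Fin b)) = St t := by
  ext j
  simp only [St, Finset.mem_filter, Finset.mem_univ, true_and]
  have hj : (j : ℕ) < b := j.isLt
  omega

lemma tele {p : Fin b → ℕ → ℝ≥0∞} (hp : ∀ i, ∑' v, p i v = 1) (a : ℕ) :
    ∀ t : ℕ, ∑ l ∈ (St t : Finset (Fin b)), phi p a l = 1 - ∏ j ∈ (St t : Finset (Fin b)), (1 - p j a) := by
  intro t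
  induction t with
  | zero => simp [St_zero]
  | succ t ih =>
      by_cases h : t < b
      · have hnm : (⟨t, h⟩ : Fin b) ∉ (St t : Finset (Fin b)) := by simp [St]
        rw [St_succ_lt h, Finset.sum_insert hnm, Finset.prod_insert hnm, ih, phi,
          Iio_eq_St]
        exact sc1 (pone hp _ _) (prod_one_sub_le_one hp a _)
      · rw [St_succ_ge h, ih]

lemma tele_Iic {p : Fin b → ℕ → ℝ≥0∞} (hp : ∀ i, ∑' v, p i v = 1) (a : ℕ) (L : Fin b) :
    ∑ l ∈ Finset.Iic L, phi p a l = 1 - ∏ j ∈ Finset.Iic L, (1 - p j a) := by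
  have hIic : Finset.Iic L = (St (L.val + 1) : Finset (Fin b)) := by
    ext j
    simp only [Finset.mem_Iic, St, Finset.mem_filter, Finset.mem_univ, true_and, Fin.le_def,
      Nat.lt_succ_iff]
  rw [hIic, tele hp]

/-- K1: the number of collisions equals the number of non-first-occurrence indices. -/
lemma card_image_eq (x : Fin b → ℕ) :
    (Finset.univ.image x).card
      = (Finset.univ.filter (fun i => ∀ l, l < i → x l ≠ x i)).card := by
  refine (Finset.card_bij (fun (i : Fin b) (_ : i ∈ Finset.univ.filter (fun i => ∀ l, l < i → x l ≠ x i)) => x i) ?_ ?_ ?_).symm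
  · intro a ha; exact Finset.mem_image_of_mem x (Finset.mem_univ a)
  · intro a₁ ha₁ a₂ ha₂ hx
    simp only [Finset.mem_filter, Finset.mem_univ, true_and] at ha₁ ha₂
    by_contra hne
    rcases lt_or_gt_of_ne hne with h | h
    · exact ha₂ a₁ h hx
    · exact ha₁ a₂ h hx.symm
  · intro v hv
    obtain ⟨i, _, rfl⟩ := Finset.mem_image.mp hv
    have hne : (Finset.univ.filter (fun j => x j = x i)).Nonempty :=
      ⟨i, by simp⟩
    set i₀ := (Finset.univ.filter (fun j => x j = x i)).min' hne with hi₀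
    have hmem : i₀ ∈ Finset.univ.filter (fun j => x j = x i) := Finset.min'_mem _ hne
    have hxi₀ : x i₀ = x i := (Finset.mem_filter.mp hmem).2
    refine ⟨i₀, ?_, hxi₀⟩
    simp only [Finset.mem_filter, Finset.mem_univ, true_and]
    intro l hl hxl
    have : i₀ ≤ l := Finset.min'_le _ l (by simp [hxl.trans hxi₀])
    exact absurd hl (not_lt.mpr this)

lemma fcol_eq_card (x : Fin b → ℕ) :
    fcol x = (Finset.univ.filter (fun i => ∃ l, l < i ∧ x l = x i)).card := by
  have h := Finset.card_filter_add_card_filter_not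
    (s := (Finset.univ : Finset (Fin b))) (fun i => ∀ l, l < i → x l ≠ x i)
  rw [Finset.card_univ, Fintype.card_fin] at h
  have h2 : (Finset.univ.filter (fun i => ¬ ∀ l, l < i → x l ≠ x i))
      = Finset.univ.filter (fun i : Fin b => ∃ l, l < i ∧ x l = x i) := by
    apply Finset.filter_congr
    intro i _
    constructor
    · intro hi; push_neg at hi; obtain ⟨l, hl, he⟩ := hi; exact ⟨l, hl, he⟩
    · rintro ⟨l, hl, he⟩ hi; exact hi l hl he
  rw [fcol, card_image_eq x, ← h2]
  omega

lemma fcol_cast (x : Fin b → ℕ) :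
    (fcol x : ℝ≥0∞) = ∑ i : Fin b, (if ∃ l, l < i ∧ x l = x i then 1 else 0) := by
  rw [fcol_eq_card, Finset.card_filter, Nat.cast_sum]
  exact Finset.sum_congr rfl (fun i _ => by split <;> simp

)



lemma sum_ind_eq (p : Fin b → ℕ → ℝ≥0∞) (j : Fin b) (w : ℕ) :
    ∑' v, p j v * (if v = w then 1 else 0) = p j w := by
  have h : ∀ v, p j v * (if v = w then 1 else 0) = if v = w then p j w else 0 := by
    intro v; by_cases h : v = w
    · subst h; simp
    · simp [h]
  simp_rw [h]
  exact tsum_ite_eq w (fun _ => p j w)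

lemma sum_ind_ne {p : Fin b → ℕ → ℝ≥0∞} (hp : ∀ i, ∑' v, p i v = 1) (j : Fin b) (a : ℕ) :
    ∑' v, p j v * (if v = a then 0 else 1) = 1 - p j a := by
  have h : ∀ v, p j v * (if v = a then 0 else 1) = if v = a then 0 else p j v := by
    intro v; by_cases h : v = a <;> simp [h]
  simp_rw [h]
  exact sumne hp j a

lemma evalB_core {p : Fin b → ℕ → ℝ≥0∞} (hp : ∀ i, ∑' v, p i v = 1)
    (i : Fin b) (a : ℕ) (y : Fin b → ℕ) :
    ∑' x : Fin b → ℕ, Pp p x * (if y = Function.update x i a then 1 else 0)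
      = (if y i = a then 1 else 0) * ∏ j ∈ Finset.univ.erase i, p j (y j) := by
  have key : ∀ x : Fin b → ℕ, (if y = Function.update x i a then (1:ℝ≥0∞) else 0)
      = ∏ j, (if j = i then (if y i = a then (1:ℝ≥0∞) else 0)
          else (if x j = y j then 1 else 0)) := by
    intro x
    by_cases h : y = Function.update x i a
    · rw [if_pos h]
      symm
      apply Finset.prod_eq_one
      intro j _
      by_cases hj : j = i
      · subst hj
        rw [if_pos rfl, if_pos (by rw [h, Function.update_self])]
      · rw [if_neg hj, if_pos (by rw [h, Function.update_of_ne hj])]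
    · rw [if_neg h]
      symm
      by_cases hi : y i = a
      · have hex : ∃ j, j ≠ i ∧ x j ≠ y j := by
          by_contra hc
          push_neg at hc
          apply h
          funext j
          by_cases hj : j = i
          · subst hj; rw [Function.update_self]; exact hi
          · rw [Function.update_of_ne hj]; exact (hc j hj).symm
        obtain ⟨j, hj, hxj⟩ := hex
        exact Finset.prod_eq_zero (Finset.mem_univ j) (by rw [if_neg hj, if_neg hxj])
      · exact Finset.prod_eq_zero (Finset.mem_univ i) (by rw [if_pos rfl, if_neg hi])
  calc ∑' x : Fin b → ℕ, Pp p x * (if y = Function.update x i a then 1 else 0)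
      = ∑' x : Fin b → ℕ, ∏ j, (p j (x j) * (if j = i then (if y i = a then (1:ℝ≥0∞) else 0)
          else (if x j = y j then 1 else 0))) := by
        refine tsum_congr fun x => ?_
        rw [key x, Pp, ← Finset.prod_mul_distrib]
    _ = ∏ j, ∑' v, (p j v * (if j = i then (if y i = a then (1:ℝ≥0∞) else 0)
          else (if v = y j then 1 else 0))) :=
        split b (fun j v => p j v * (if j = i then (if y i = a then (1:ℝ≥0∞) else 0)
          else (if v = y j then 1 else 0)))
    _ = (if y i = a then 1 else 0) * ∏ j ∈ Finset.univ.erase i, p j (y j) := by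
        rw [← Finset.mul_prod_erase Finset.univ _ (Finset.mem_univ i)]
        congr 1
        · rw [show (fun v => p i v * (if i = i then (if y i = a then (1:ℝ≥0∞) else 0)
              else (if v = y i then 1 else 0))) = fun v => p i v * (if y i = a then 1 else 0)
              from funext fun v => by rw [if_pos rfl]]
          rw [ENNReal.tsum_mul_right, hp i, one_mul]
        · refine Finset.prod_congr rfl fun j hj => ?_
          have hji : j ≠ i := (Finset.mem_erase.mp hj).1
          simp only [if_neg hji]
          exact sum_ind_eq p j (y j)

lemma evalA_core {p : Fin b → ℕ → ℝ≥0∞} (hp : ∀ i, ∑' v, p i v = 1)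
    {i l : Fin b} (hne : l ≠ i) (a : ℕ) (y : Fin b → ℕ) :
    ∑' x : Fin b → ℕ, Pp p x *
        (if (x l ≠ a) ∧ y = Function.update (Function.update x i a) l a then 1 else 0)
      = (if y i = a then 1 else 0) * (((if y l = a then 1 else 0) * (1 - p l a)) *
          ∏ j ∈ (Finset.univ.erase i).erase l, p j (y j)) := by
  have key : ∀ x : Fin b → ℕ,
      (if (x l ≠ a) ∧ y = Function.update (Function.update x i a) l a then (1:ℝ≥0∞) else 0)
      = ∏ j, (if j = i then (if y i = a then (1:ℝ≥0∞) else 0)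
          else if j = l then ((if y l = a then (1:ℝ≥0∞) else 0) * (if x j = a then 0 else 1))
          else (if x j = y j then 1 else 0)) := by
    intro x
    by_cases h : (x l ≠ a) ∧ y = Function.update (Function.update x i a) l a
    · rw [if_pos h]
      obtain ⟨hxl, hy⟩ := h
      have hyi : y i = a := by
        rw [hy, Function.update_of_ne (Ne.symm hne), Function.update_self]
      have hyl : y l = a := by rw [hy, Function.update_self]
      symm
      apply Finset.prod_eq_one
      intro j _
      by_cases hj : j = i
      · subst hj; rw [if_pos rfl, if_pos hyi]
      · by_cases hjl : j = l
        · subst hjl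
          rw [if_neg hj, if_pos rfl, if_pos hyl, if_neg hxl, one_mul]
        · rw [if_neg hj, if_neg hjl, if_pos
            (by rw [hy, Function.update_of_ne hjl, Function.update_of_ne hj])]
    · rw [if_neg h]
      symm
      by_cases hxl : x l = a
      · refine Finset.prod_eq_zero (Finset.mem_univ l) ?_
        rw [if_neg hne, if_pos rfl, if_pos hxl, mul_zero]
      · have hy : y ≠ Function.update (Function.update x i a) l a := fun hy => h ⟨hxl, hy⟩
        by_cases hyi : y i = a
        · by_cases hyl : y l = a
          · have hex : ∃ j, j ≠ i ∧ j ≠ l ∧ x j ≠ y j := by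
              by_contra hc
              push_neg at hc
              apply hy
              funext j
              by_cases hjl : j = l
              · subst hjl; rw [Function.update_self]; exact hyl
              · by_cases hji : j = i
                · subst hji
                  rw [Function.update_of_ne (Ne.symm hne), Function.update_self]; exact hyi
                · rw [Function.update_of_ne hjl, Function.update_of_ne hji]
                  exact (hc j hji hjl).symm
            obtain ⟨j, hji, hjl, hxj⟩ := hex
            exact Finset.prod_eq_zero (Finset.mem_univ j)
              (by rw [if_neg hji, if_neg hjl, if_neg hxj])
          · refine Finset.prod_eq_zero (Finset.mem_univ l) ?_
            rw [if_neg hne, if_pos rfl, if_neg hyl, zero_mul]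
        · exact Finset.prod_eq_zero (Finset.mem_univ i) (by rw [if_pos rfl, if_neg hyi])
  calc ∑' x : Fin b → ℕ, Pp p x *
        (if (x l ≠ a) ∧ y = Function.update (Function.update x i a) l a then 1 else 0)
      = ∑' x : Fin b → ℕ, ∏ j, (p j (x j) * (if j = i then (if y i = a then (1:ℝ≥0∞) else 0)
          else if j = l then ((if y l = a then (1:ℝ≥0∞) else 0) * (if x j = a then 0 else 1))
          else (if x j = y j then 1 else 0))) := by
        refine tsum_congr fun x => ?_
        rw [key x, Pp, ← Finset.prod_mul_distrib]
    _ = ∏ j, ∑' v, (p j v * (if j = i then (if y i = a then (1:ℝ≥0∞) else 0)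
          else if j = l then ((if y l = a then (1:ℝ≥0∞) else 0) * (if v = a then 0 else 1))
          else (if v = y j then 1 else 0))) :=
        split b (fun j v => p j v * (if j = i then (if y i = a then (1:ℝ≥0∞) else 0)
          else if j = l then ((if y l = a then (1:ℝ≥0∞) else 0) * (if v = a then 0 else 1))
          else (if v = y j then 1 else 0)))
    _ = (if y i = a then 1 else 0) * (((if y l = a then 1 else 0) * (1 - p l a)) *
          ∏ j ∈ (Finset.univ.erase i).erase l, p j (y j)) := by
        rw [← Finset.mul_prod_erase Finset.univ _ (Finset.mem_univ i),
          ← Finset.mul_prod_erase (Finset.univ.erase i) _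
            (Finset.mem_erase.mpr ⟨hne, Finset.mem_univ l⟩)]
        congr 1
        · rw [show (fun v => p i v * (if i = i then (if y i = a then (1:ℝ≥0∞) else 0)
              else if i = l then ((if y l = a then (1:ℝ≥0∞) else 0) * (if v = a then 0 else 1))
              else (if v = y i then 1 else 0)))
              = fun v => p i v * (if y i = a then 1 else 0)
              from funext fun v => by rw [if_pos rfl]]
          rw [ENNReal.tsum_mul_right, hp i, one_mul]
        congr 1
        · rw [show (fun v => p l v * (if l = i then (if y i = a then (1:ℝ≥0∞) else 0)
              else if l = l then ((if y l = a then (1:ℝ≥0∞) else 0) * (if v = a then 0 else 1))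
              else (if v = y l then 1 else 0)))
              = fun v => (if y l = a then (1:ℝ≥0∞) else 0) * (p l v * (if v = a then 0 else 1))
              from funext fun v => by rw [if_neg hne, if_pos rfl]; ring]
          rw [ENNReal.tsum_mul_left, sum_ind_ne hp l a]
        · refine Finset.prod_congr rfl fun j hj => ?_
          have hjl : j ≠ l := (Finset.mem_erase.mp hj).1
          have hji : j ≠ i := (Finset.mem_erase.mp (Finset.mem_erase.mp hj).2).1
          simp only [if_neg hji, if_neg hjl]
          exact sum_ind_eq p j (y j)

/-- scalar lemma for the main cancellation -/
lemma sc2 {t G : ℝ≥0∞} (ht : t ≤ 1) (hG : G ≤ 1) :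
    t * G * (1 - t) + (1 - (1 - t) * G) * t = t := by
  have hu : (1 - t) * G ≤ 1 := mul_le_one' tsub_le_self hG
  calc t * G * (1 - t) + (1 - (1 - t) * G) * t
      = t * ((1 - t) * G) + t * (1 - (1 - t) * G) := by ring
    _ = t * ((1 - t) * G + (1 - (1 - t) * G)) := by rw [mul_add]
    _ = t * 1 := by rw [add_tsub_cancel_of_le hu]
    _ = t := mul_one t

/-- K3: exactness of the per-(i,a) coupling component. -/
lemma K3 {p : Fin b → ℕ → ℝ≥0∞} (hp : ∀ i, ∑' v, p i v = 1)
    (i : Fin b) (a : ℕ) (y : Fin b → ℕ) :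
    ∑' x : Fin b → ℕ, ∑ l ∈ Finset.Iio i, trm p i a l x y
      = Pp p y * (if y i = a ∧ ∃ l, l < i ∧ y l = a then 1 else 0) := by
  rw [Summable.tsum_finsetSum (fun l _ => ENNReal.summable)]
  -- rewrite each inner sum
  have inner : ∀ l ∈ Finset.Iio i, ∑' x, trm p i a l x y
      = p i a * phi p a l *
          ((if (∀ j, l < j → j < i → y j ≠ a) then 1 else 0) *
            ((if y i = a then 1 else 0) * (((if y l = a then 1 else 0) * (1 - p l a)) *
              ∏ j ∈ (Finset.univ.erase i).erase l, p j (y j)))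
          + (if (∃ j, l ≤ j ∧ j < i ∧ y j = a) then 1 else 0) *
            ((if y i = a then 1 else 0) * ∏ j ∈ Finset.univ.erase i, p j (y j))) := by
    intro l hl
    have hli : l < i := Finset.mem_Iio.mp hl
    have hne : l ≠ i := ne_of_lt hli
    have keyA : ∀ x : Fin b → ℕ,
        (if (∀ j, l ≤ j → j < i → x j ≠ a) ∧
            y = Function.update (Function.update x i a) l a then (1:ℝ≥0∞) else 0)
        = (if (∀ j, l < j → j < i → y j ≠ a) then 1 else 0) *
          (if (x l ≠ a) ∧ y = Function.update (Function.update x i a) l a then 1 else 0) := by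
      intro x
      by_cases h2 : y = Function.update (Function.update x i a) l a
      · have hxy : ∀ j, l < j → j < i → y j = x j := by
          intro j hj1 hj2
          rw [h2, Function.update_of_ne (ne_of_gt hj1), Function.update_of_ne (ne_of_lt hj2)]
        by_cases hC : ∀ j, l ≤ j → j < i → x j ≠ a
        · rw [if_pos ⟨hC, h2⟩, if_pos (fun j hj1 hj2 => by
            rw [hxy j hj1 hj2]; exact hC j (le_of_lt hj1) hj2),
            if_pos ⟨hC l le_rfl hli, h2⟩, one_mul]
        · rw [if_neg (fun hh => hC hh.1)]
          push_neg at hC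
          obtain ⟨j, hj1, hj2, hj3⟩ := hC
          rcases eq_or_lt_of_le hj1 with rfl | hlt
          · rw [if_neg (fun hh : (x l ≠ a) ∧
                y = Function.update (Function.update x i a) l a => hh.1 hj3), mul_zero]
          · rw [if_neg (fun hh : (∀ j, l < j → j < i → y j ≠ a) =>
              hh j hlt hj2 (by rw [hxy j hlt hj2]; exact hj3)), zero_mul]
      · rw [if_neg (fun hh : (∀ j, l ≤ j → j < i → x j ≠ a) ∧
            y = Function.update (Function.update x i a) l a => h2 hh.2),
          if_neg (fun hh : (x l ≠ a) ∧
            y = Function.update (Function.update x i a) l a => h2 hh.2), mul_zero]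
    have keyB : ∀ x : Fin b → ℕ,
        (if (∃ j, l ≤ j ∧ j < i ∧ x j = a) ∧ y = Function.update x i a then (1:ℝ≥0∞) else 0)
        = (if (∃ j, l ≤ j ∧ j < i ∧ y j = a) then 1 else 0) *
          (if y = Function.update x i a then 1 else 0) := by
      intro x
      by_cases h2 : y = Function.update x i a
      · have hxy : ∀ j, j < i → y j = x j := by
          intro j hj
          rw [h2, Function.update_of_ne (ne_of_lt hj)]
        by_cases hE : ∃ j, l ≤ j ∧ j < i ∧ x j = a
        · obtain ⟨j, hj1, hj2, hj3⟩ := hE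
          rw [if_pos ⟨⟨j, hj1, hj2, hj3⟩, h2⟩, if_pos ⟨j, hj1, hj2, by rw [hxy j hj2]; exact hj3⟩,
            if_pos h2, mul_one]
        · rw [if_neg (fun hh => hE hh.1), if_neg (fun hh : ∃ j, l ≤ j ∧ j < i ∧ y j = a => by
            obtain ⟨j, hj1, hj2, hj3⟩ := hh
            exact hE ⟨j, hj1, hj2, by rw [← hxy j hj2]; exact hj3⟩), zero_mul]
      · rw [if_neg (fun hh => h2 hh.2), if_neg h2, mul_zero]
    calc ∑' x, trm p i a l x y
        = p i a * phi p a l * (∑' x, Pp p x *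
            ((if (∀ j, l < j → j < i → y j ≠ a) then 1 else 0) *
              (if (x l ≠ a) ∧ y = Function.update (Function.update x i a) l a then 1 else 0)
            + (if (∃ j, l ≤ j ∧ j < i ∧ y j = a) then 1 else 0) *
              (if y = Function.update x i a then 1 else 0))) := by
          rw [← ENNReal.tsum_mul_left]
          refine tsum_congr fun x => ?_
          rw [trm, keyA x, keyB x]; ring
      _ = _ := by
          have expand : ∀ x, Pp p x *
              ((if (∀ j, l < j → j < i → y j ≠ a) then (1:ℝ≥0∞) else 0) *
                (if (x l ≠ a) ∧ y = Function.update (Function.update x i a) l a then 1 else 0)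
              + (if (∃ j, l ≤ j ∧ j < i ∧ y j = a) then 1 else 0) *
                (if y = Function.update x i a then 1 else 0))
              = (if (∀ j, l < j → j < i → y j ≠ a) then (1:ℝ≥0∞) else 0) *
                  (Pp p x * (if (x l ≠ a) ∧ y = Function.update (Function.update x i a) l a
                    then 1 else 0))
                + (if (∃ j, l ≤ j ∧ j < i ∧ y j = a) then 1 else 0) *
                  (Pp p x * (if y = Function.update x i a then 1 else 0)) := by
            intro x; ring
          simp_rw [expand]
          rw [ENNReal.tsum_add, ENNReal.tsum_mul_left, ENNReal.tsum_mul_left,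
            evalA_core hp hne a y, evalB_core hp i a y]
  rw [Finset.sum_congr rfl inner]
  by_cases hyi : y i = a
  · by_cases hex : ∃ l, l < i ∧ y l = a
    · -- main case
      have hFne : (Finset.univ.filter (fun l : Fin b => l < i ∧ y l = a)).Nonempty := by
        obtain ⟨l, hl1, hl2⟩ := hex
        exact ⟨l, by simp [hl1, hl2]⟩
      set L := (Finset.univ.filter (fun l : Fin b => l < i ∧ y l = a)).max' hFne with hLdef
      have hLmem := Finset.max'_mem _ hFne
      rw [Finset.mem_filter] at hLmem
      have hL1 : L < i := hLmem.2.1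
      have hL2 : y L = a := hLmem.2.2
      have hLmax : ∀ j, L < j → j < i → y j ≠ a := by
        intro j hj1 hj2 hja
        have : j ≤ L := Finset.le_max' _ j (by simp [hj2, hja])
        omega
      have hLne : L ≠ i := ne_of_lt hL1
      -- split sum into A and B parts
      have splitAB : ∀ l ∈ Finset.Iio i, p i a * phi p a l *
          ((if (∀ j, l < j → j < i → y j ≠ a) then (1:ℝ≥0∞) else 0) *
            ((if y i = a then 1 else 0) * (((if y l = a then 1 else 0) * (1 - p l a)) *
              ∏ j ∈ (Finset.univ.erase i).erase l, p j (y j)))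
          + (if (∃ j, l ≤ j ∧ j < i ∧ y j = a) then 1 else 0) *
            ((if y i = a then 1 else 0) * ∏ j ∈ Finset.univ.erase i, p j (y j)))
          = (p i a * phi p a l *
              ((if (y l = a ∧ ∀ j, l < j → j < i → y j ≠ a) then (1:ℝ≥0∞) else 0) *
                ((1 - p l a) * ∏ j ∈ (Finset.univ.erase i).erase l, p j (y j))))
            + (p i a * ((if l ≤ L then (1:ℝ≥0∞) else 0) * phi p a l) *
                ∏ j ∈ Finset.univ.erase i, p j (y j)) := by
        intro l hl
        have hli : l < i := Finset.mem_Iio.mp hl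
        have hBiff : (∃ j, l ≤ j ∧ j < i ∧ y j = a) ↔ l ≤ L := by
          constructor
          · rintro ⟨j, hj1, hj2, hj3⟩
            have : j ≤ L := Finset.le_max' _ j (by simp [hj2, hj3])
            omega
          · intro hlL; exact ⟨L, hlL, hL1, hL2⟩
        rw [if_pos hyi]
        have h1 : (if (∀ j, l < j → j < i → y j ≠ a) then (1:ℝ≥0∞) else 0) *
            (if y l = a then 1 else 0) = (if (y l = a ∧ ∀ j, l < j → j < i → y j ≠ a)
              then (1:ℝ≥0∞) else 0) := by
          by_cases h1 : y l = a <;> by_cases h2 : ∀ j, l < j → j < i → y j ≠ a <;>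
            simp [h1, h2]
        have h2 : (if (∃ j, l ≤ j ∧ j < i ∧ y j = a) then (1:ℝ≥0∞) else 0)
            = (if l ≤ L then 1 else 0) := by
          by_cases h : l ≤ L
          · rw [if_pos (hBiff.mpr h), if_pos h]
          · rw [if_neg (fun hh => h (hBiff.mp hh)), if_neg h]
        rw [h2, ← h1]
        ring
      rw [Finset.sum_congr rfl splitAB, Finset.sum_add_distrib]
      -- A part: only l = L survives
      have hApart : ∑ l ∈ Finset.Iio i, (p i a * phi p a l *
          ((if (y l = a ∧ ∀ j, l < j → j < i → y j ≠ a) then (1:ℝ≥0∞) else 0) *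
            ((1 - p l a) * ∏ j ∈ (Finset.univ.erase i).erase l, p j (y j))))
          = p i a * phi p a L *
              ((1 - p L a) * ∏ j ∈ (Finset.univ.erase i).erase L, p j (y j)) := by
        rw [Finset.sum_eq_single L]
        · rw [if_pos ⟨hL2, hLmax⟩, one_mul]
        · intro l hl hlL
          have hli : l < i := Finset.mem_Iio.mp hl
          have : ¬ (y l = a ∧ ∀ j, l < j → j < i → y j ≠ a) := by
            rintro ⟨hy1, hy2⟩
            have hlmem : l ≤ L := Finset.le_max' _ l (by simp [hli, hy1])
            have hlt : l < L := lt_of_le_of_ne hlmem hlL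
            exact hy2 L hlt hL1 hL2
          rw [if_neg this, zero_mul, mul_zero]
        · intro h; exact absurd (Finset.mem_Iio.mpr hL1) h
      -- B part: telescope
      have hBpart : ∑ l ∈ Finset.Iio i, (p i a * ((if l ≤ L then (1:ℝ≥0∞) else 0) * phi p a l) *
          ∏ j ∈ Finset.univ.erase i, p j (y j))
          = p i a * (1 - ∏ j ∈ Finset.Iic L, (1 - p j a)) *
              ∏ j ∈ Finset.univ.erase i, p j (y j) := by
        have step1 : ∀ l ∈ Finset.Iio i, (p i a * ((if l ≤ L then (1:ℝ≥0∞) else 0) * phi p a l) *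
            ∏ j ∈ Finset.univ.erase i, p j (y j))
            = (if l ≤ L then phi p a l else 0) *
                (p i a * ∏ j ∈ Finset.univ.erase i, p j (y j)) := by
          intro l _
          by_cases h : l ≤ L
          · rw [if_pos h, if_pos h]; ring
          · rw [if_neg h, if_neg h]; ring
        rw [Finset.sum_congr rfl step1, ← Finset.sum_mul, ← Finset.sum_filter]
        have hfil : (Finset.Iio i).filter (fun l => l ≤ L) = Finset.Iic L := by
          ext l
          simp only [Finset.mem_filter, Finset.mem_Iio, Finset.mem_Iic]
          exact ⟨fun h => h.2, fun h => ⟨lt_of_le_of_lt h hL1, h⟩⟩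
        rw [hfil, tele_Iic hp a L]
        ring
      rw [hApart, hBpart, if_pos ⟨hyi, hex⟩, mul_one]
      have hLei : L ∈ Finset.univ.erase i := Finset.mem_erase.mpr ⟨hLne, Finset.mem_univ L⟩
      have hR : ∏ j ∈ Finset.univ.erase i, p j (y j)
          = p L a * ∏ j ∈ (Finset.univ.erase i).erase L, p j (y j) := by
        rw [← Finset.mul_prod_erase _ _ hLei, hL2]
      have hPy : Pp p y = p i a *
          (p L a * ∏ j ∈ (Finset.univ.erase i).erase L, p j (y j)) := by
        rw [Pp, ← Finset.mul_prod_erase _ _ (Finset.mem_univ i), hyi, hR]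
      have hIic : ∏ j ∈ Finset.Iic L, (1 - p j a)
          = (1 - p L a) * ∏ j ∈ Finset.Iio L, (1 - p j a) := by
        rw [← Finset.Iio_insert, Finset.prod_insert (by simp)]
      rw [hPy, hIic, hR, phi]
      have hsc := sc2 (pone hp L a) (prod_one_sub_le_one hp a (Finset.Iio L))
      calc p i a * (p L a * ∏ j ∈ Finset.Iio L, (1 - p j a)) *
            ((1 - p L a) * ∏ j ∈ (Finset.univ.erase i).erase L, p j (y j))
          + p i a * (1 - (1 - p L a) * ∏ j ∈ Finset.Iio L, (1 - p j a)) *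
            (p L a * ∏ j ∈ (Finset.univ.erase i).erase L, p j (y j))
          = p i a * ((p L a * (∏ j ∈ Finset.Iio L, (1 - p j a)) * (1 - p L a)
              + (1 - (1 - p L a) * ∏ j ∈ Finset.Iio L, (1 - p j a)) * p L a) *
              ∏ j ∈ (Finset.univ.erase i).erase L, p j (y j)) := by ring
        _ = p i a * (p L a * ∏ j ∈ (Finset.univ.erase i).erase L, p j (y j)) := by
            rw [hsc]
    · -- no collision below i: all terms vanish
      rw [Finset.sum_eq_zero, if_neg (fun hh => hex hh.2), mul_zero]
      intro l hl
      have hli : l < i := Finset.mem_Iio.mp hl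
      have hA : ¬ (y l = a) := fun h => hex ⟨l, hli, h⟩
      have hB : ¬ (∃ j, l ≤ j ∧ j < i ∧ y j = a) := by
        rintro ⟨j, _, hj2, hj3⟩; exact hex ⟨j, hj2, hj3⟩
      rw [if_neg hA, if_neg hB]
      ring
  · -- y i ≠ a
    rw [Finset.sum_eq_zero, if_neg (fun hh => hyi hh.1), mul_zero]
    intro l _
    rw [if_neg hyi]
    ring
noncomputable def Wq (p : Fin b → ℕ → ℝ≥0∞) : ℝ≥0∞ :=
  ∑ i, ∑' a : ℕ, p i a * ∑ l ∈ Finset.Iio i, phi p a l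
lemma lam_second {p : Fin b → ℕ → ℝ≥0∞} (hp : ∀ i, ∑' v, p i v = 1) (y : Fin b → ℕ) :
    ∑' x, Lam p x y = Pp p y * (fcol y : ℝ≥0∞) := by
  calc ∑' x, Lam p x y
      = ∑ i, ∑' x : Fin b → ℕ, ∑' a : ℕ, ∑ l ∈ Finset.Iio i, trm p i a l x y := by
        simp only [Lam]
        exact Summable.tsum_finsetSum (fun i _ => ENNReal.summable)
    _ = ∑ i, ∑' a : ℕ, ∑' x : Fin b → ℕ, ∑ l ∈ Finset.Iio i, trm p i a l x y :=
        Finset.sum_congr rfl fun i _ => ENNReal.tsum_comm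
    _ = ∑ i, ∑' a : ℕ, Pp p y * (if y i = a ∧ ∃ l, l < i ∧ y l = a then 1 else 0) :=
        Finset.sum_congr rfl fun i _ => tsum_congr fun a => K3 hp i a y
    _ = ∑ i, Pp p y * (if ∃ l, l < i ∧ y l = y i then 1 else 0) := by
        refine Finset.sum_congr rfl fun i _ => ?_
        rw [tsum_eq_single (y i) (fun a ha => by
          rw [if_neg (fun hh : y i = a ∧ ∃ l, l < i ∧ y l = a => ha hh.1.symm), mul_zero])]
        congr 1
        by_cases h : ∃ l, l < i ∧ y l = y i
        · rw [if_pos ⟨rfl, h⟩, if_pos h]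
        · rw [if_neg (fun hh => h hh.2), if_neg h]
    _ = Pp p y * (fcol y : ℝ≥0∞) := by rw [← Finset.mul_sum, fcol_cast y]

lemma sum_ind_cond (Q : Prop) [Decidable Q] (c : Fin b → ℕ) :
    ∑' y : Fin b → ℕ, (if Q ∧ y = c then (1:ℝ≥0∞) else 0) = if Q then 1 else 0 := by
  by_cases hQ : Q
  · rw [if_pos hQ]
    have h : ∀ y : Fin b → ℕ, (if Q ∧ y = c then (1:ℝ≥0∞) else 0)
        = (if y = c then 1 else 0) := fun y => by
      by_cases hy : y = c <;> simp [hy, hQ]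
    simp_rw [h]
    exact tsum_ite_eq c 1
  · simp [hQ]

lemma lam_first {p : Fin b → ℕ → ℝ≥0∞} (hp : ∀ i, ∑' v, p i v = 1) (x : Fin b → ℕ) :
    ∑' y, Lam p x y = Pp p x * Wq p := by
  have inner : ∀ (i : Fin b) (a : ℕ) (l : Fin b), ∑' y : Fin b → ℕ, trm p i a l x y
      = p i a * phi p a l * Pp p x := by
    intro i a l
    simp only [trm]
    simp_rw [mul_add]
    rw [ENNReal.tsum_add, ENNReal.tsum_mul_left, ENNReal.tsum_mul_left,
      sum_ind_cond _ _, sum_ind_cond _ _]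
    have hneg : (∃ j, l ≤ j ∧ j < i ∧ x j = a) ↔ ¬ (∀ j, l ≤ j → j < i → x j ≠ a) := by
      constructor
      · rintro ⟨j, h1, h2, h3⟩ hC; exact hC j h1 h2 h3
      · intro h; push_neg at h; exact h
    by_cases hC : ∀ j, l ≤ j → j < i → x j ≠ a
    · rw [if_pos hC, if_neg (fun hE => (hneg.mp hE) hC), mul_one, mul_zero, add_zero]
    · rw [if_neg hC, if_pos (hneg.mpr hC), mul_one, mul_zero, zero_add]
  calc ∑' y, Lam p x y
      = ∑ i, ∑' a : ℕ, ∑ l ∈ Finset.Iio i, ∑' y : Fin b → ℕ, trm p i a l x y := by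
        simp only [Lam]
        rw [Summable.tsum_finsetSum (fun i _ => ENNReal.summable)]
        exact Finset.sum_congr rfl fun i _ =>
          (ENNReal.tsum_comm.trans (tsum_congr fun a => Summable.tsum_finsetSum fun l _ => ENNReal.summable))
    _ = ∑ i, ∑' a : ℕ, Pp p x * (p i a * ∑ l ∈ Finset.Iio i, phi p a l) := by
        refine Finset.sum_congr rfl fun i _ => tsum_congr fun a => ?_
        rw [Finset.sum_congr rfl (fun l _ => inner i a l), ← Finset.sum_mul,
          ← Finset.mul_sum, mul_comm]
    _ = Pp p x * Wq p := by
        rw [Wq, Finset.mul_sum]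
        exact Finset.sum_congr rfl fun i _ => ENNReal.tsum_mul_left

lemma TOT {p : Fin b → ℕ → ℝ≥0∞} (hp : ∀ i, ∑' v, p i v = 1) :
    ∑' x : Fin b → ℕ, Pp p x = 1 := by
  have h := split b p
  simp only [Pp]
  rw [h]
  exact Finset.prod_eq_one fun i _ => hp i

lemma W_eq_m {p : Fin b → ℕ → ℝ≥0∞} (hp : ∀ i, ∑' v, p i v = 1) :
    Wq p = ∑' x : Fin b → ℕ, Pp p x * (fcol x : ℝ≥0∞) := by
  have h1 : ∑' (x : Fin b → ℕ) (y : Fin b → ℕ), Lam p x y = Wq p := by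
    rw [tsum_congr (fun x => lam_first hp x), ENNReal.tsum_mul_right, TOT hp, one_mul]
  have h2 : ∑' (y : Fin b → ℕ) (x : Fin b → ℕ), Lam p x y
      = ∑' y : Fin b → ℕ, Pp p y * (fcol y : ℝ≥0∞) :=
    tsum_congr fun y => lam_second hp y
  rw [← h1, ENNReal.tsum_comm, h2]

section support

lemma img_upd_sub (x : Fin b → ℕ) (i : Fin b) (a : ℕ) :
    Finset.univ.image (Function.update x i a) ⊆ insert a (Finset.univ.image x) := by
  intro v hv
  obtain ⟨j, _, rfl⟩ := Finset.mem_image.mp hv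
  by_cases hj : j = i
  · subst hj; rw [Function.update_self]; exact Finset.mem_insert_self a _
  · rw [Function.update_of_ne hj]
    exact Finset.mem_insert_of_mem (Finset.mem_image_of_mem x (Finset.mem_univ j))

lemma img_sub_upd (x : Fin b → ℕ) (i : Fin b) (a : ℕ) :
    Finset.univ.image x ⊆ insert (x i) (Finset.univ.image (Function.update x i a)) := by
  intro v hv
  obtain ⟨j, _, rfl⟩ := Finset.mem_image.mp hv
  by_cases hj : j = i
  · subst hj; exact Finset.mem_insert_self _ _
  · refine Finset.mem_insert_of_mem ?_
    rw [show x j = Function.update x i a j from (Function.update_of_ne hj a x).symm]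
    exact Finset.mem_image_of_mem _ (Finset.mem_univ j)

lemma img_upd2_sub (x : Fin b → ℕ) (i l : Fin b) (a : ℕ) :
    Finset.univ.image (Function.update (Function.update x i a) l a)
      ⊆ insert a (Finset.univ.image x) := by
  refine (img_upd_sub _ l a).trans ?_
  intro v hv
  rcases Finset.mem_insert.mp hv with rfl | hv
  · exact Finset.mem_insert_self _ _
  · exact img_upd_sub x i a hv

lemma card_bounds_upd (x : Fin b → ℕ) (i : Fin b) (a : ℕ) :
    (Finset.univ.image (Function.update x i a)).card ≤ (Finset.univ.image x).card + 1
    ∧ (Finset.univ.image x).card ≤ (Finset.univ.image (Function.update x i a)).card + 1 :=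
  ⟨(Finset.card_le_card (img_upd_sub x i a)).trans (Finset.card_insert_le _ _),
   (Finset.card_le_card (img_sub_upd x i a)).trans (Finset.card_insert_le _ _)⟩

lemma card_bounds_upd2 (x : Fin b → ℕ) (i l : Fin b) (a : ℕ) :
    (Finset.univ.image (Function.update (Function.update x i a) l a)).card
      ≤ (Finset.univ.image x).card + 1
    ∧ (Finset.univ.image x).card
      ≤ (Finset.univ.image (Function.update (Function.update x i a) l a)).card + 2 := by
  constructor
  · exact (Finset.card_le_card (img_upd2_sub x i l a)).trans (Finset.card_insert_le _ _)
  · calc (Finset.univ.image x).card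
        ≤ (Finset.univ.image (Function.update x i a)).card + 1 := (card_bounds_upd x i a).2
      _ ≤ ((Finset.univ.image (Function.update (Function.update x i a) l a)).card + 1) + 1 :=
          Nat.add_le_add_right (card_bounds_upd (Function.update x i a) l a).2 1
      _ = _ + 2 := by omega

lemma card_image_le_b (x : Fin b → ℕ) : (Finset.univ.image x).card ≤ b := by
  refine (Finset.card_image_le).trans ?_
  simp

lemma lam_support {p : Fin b → ℕ → ℝ≥0∞} {x y : Fin b → ℕ} (h : Lam p x y ≠ 0) :
    ((fcol y : ℤ) - (fcol x : ℤ)) ∈ ({-1, 0, 1, 2} : Set ℤ) := by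
  have hex : ∃ i : Fin b, ∃ a : ℕ, ∃ l ∈ Finset.Iio i, trm p i a l x y ≠ 0 := by
    by_contra hc
    push_neg at hc
    refine h (Finset.sum_eq_zero fun i _ => ?_)
    rw [ENNReal.tsum_eq_zero]
    intro a
    exact Finset.sum_eq_zero fun l hl => hc i a l hl
  obtain ⟨i, a, l, hl, hne⟩ := hex
  have hupd : y = Function.update (Function.update x i a) l a ∨ y = Function.update x i a := by
    by_contra hc
    push_neg at hc
    refine hne ?_
    rw [trm, if_neg (fun hh => hc.1 hh.2), if_neg (fun hh => hc.2 hh.2)]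
    simp
  have hxb := card_image_le_b x
  have hyb := card_image_le_b y
  have hbounds : (Finset.univ.image y).card ≤ (Finset.univ.image x).card + 1
      ∧ (Finset.univ.image x).card ≤ (Finset.univ.image y).card + 2 := by
    rcases hupd with rfl | rfl
    · exact card_bounds_upd2 x i l a
    · exact ⟨(card_bounds_upd x i a).1, (card_bounds_upd x i a).2.trans (by omega)⟩
  simp only [Set.mem_insert_iff, Set.mem_singleton_iff, fcol]
  omega

end support

end SBAux

open MeasureTheory ProbabilityTheory Filter Topology
open scoped ENNReal NNReal

/-- The size-biased law of a distribution `L` on `ℕ`, with mean `m`: it assigns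
mass `k·L{k}/m` to each `k ≥ 0`. -/
noncomputable def sizeBiased (L : Measure ℕ) (m : ℝ) : Measure ℕ :=
  Measure.sum fun k : ℕ => (((k : ℝ≥0∞) * L ({k} : Set ℕ)) / ENNReal.ofReal m) • Measure.dirac k

theorem stmt_16 {Ω : Type*} [MeasurableSpace Ω] (μ : Measure Ω) [IsProbabilityMeasure μ]
    (n b : ℕ) (hn : 1 ≤ n) (hb : 2 ≤ b)
    (X : Fin b → Ω → ℕ) (hmeas : ∀ i, Measurable (X i))
    (hindep : iIndepFun X μ)
    (hrange : ∀ i ω, X i ω ∈ Finset.Icc 1 n)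
    (C : Ω → ℕ) (hC : ∀ ω, C ω = b - (Finset.univ.image fun i => X i ω).card)
    (m : ℝ) (hm : m = ∫ ω, (C ω : ℝ) ∂μ) (hmpos : 0 < m) :
    ∃ ν : Measure (ℕ × ℕ), IsProbabilityMeasure ν ∧
      ν.map Prod.fst = μ.map C ∧
      ν.map Prod.snd = sizeBiased (μ.map C) m ∧
      ν {p : ℕ × ℕ | (p.2 : ℤ) - (p.1 : ℤ) ∉ ({-1, 0, 1, 2} : Set ℤ)} = 0 := by
  classical
  set p : Fin b → ℕ → ℝ≥0∞ := fun i v => μ ((X i) ⁻¹' {v}) with hpdef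
  -- (1) each p i is a probability vector
  have hp : ∀ i, ∑' v, p i v = 1 := by
    intro i
    have hdisj : Pairwise (Function.onFun Disjoint fun v : ℕ => X i ⁻¹' {v}) := by
      intro v w hvw
      simp only [Set.disjoint_left, Set.mem_preimage, Set.mem_singleton_iff]
      intro ω h1 h2
      exact hvw (h1.symm.trans h2)
    rw [← measure_iUnion hdisj (fun v => hmeas i (measurableSet_singleton v))]
    have : (⋃ v, X i ⁻¹' {v}) = Set.univ := by
      ext ω; simp
    rw [this]
    exact measure_univ
  -- the vector of observations
  set XX : Ω → (Fin b → ℕ) := fun ω i => X i ω with hXXdef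
  set V : (Fin b → ℕ) → Set Ω := fun x => ⋂ i, (X i) ⁻¹' {x i} with hVdef
  have hVmeas : ∀ x, MeasurableSet (V x) :=
    fun x => MeasurableSet.iInter (fun i => hmeas i (measurableSet_singleton (x i)))
  have hVmem : ∀ ω x, ω ∈ V x ↔ XX ω = x := by
    intro ω x
    simp only [hVdef, Set.mem_iInter, Set.mem_preimage, Set.mem_singleton_iff]
    exact ⟨fun h => funext h, fun h i => congrFun h i⟩
  -- (2) product formula
  have hμV : ∀ x, μ (V x) = SBAux.Pp p x := by
    intro x
    have h := (iIndepFun_iff_measure_inter_preimage_eq_mul.mp hindep) Finset.univ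
      (sets := fun i => {x i}) (fun i _ => measurableSet_singleton (x i))
    have hiInter : (⋂ i ∈ Finset.univ, (X i) ⁻¹' {x i}) = V x := by
      simp [hVdef]
    rw [hiInter] at h
    rw [h, SBAux.Pp]
  -- C measurability and identification
  have hCXX : C = fun ω => SBAux.fcol (XX ω) := funext fun ω => hC ω
  have hXXmeas : Measurable XX := measurable_pi_lambda _ (fun i => hmeas i)
  have hCmeas : Measurable C := by
    rw [hCXX]
    exact (measurable_of_countable SBAux.fcol).comp hXXmeas
  -- (3) the law of C
  have LAWC : ∀ s : Set ℕ, (μ.map C) s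
      = ∑' x : Fin b → ℕ, SBAux.Pp p x * (if SBAux.fcol x ∈ s then 1 else 0) := by
    intro s
    have hs : MeasurableSet s := s.to_countable.measurableSet
    rw [Measure.map_apply hCmeas hs]
    have hcover : C ⁻¹' s = ⋃ x : Fin b → ℕ, (C ⁻¹' s ∩ V x) := by
      ext ω
      constructor
      · intro h
        exact Set.mem_iUnion.mpr ⟨XX ω, h, (hVmem ω (XX ω)).mpr rfl⟩
      · intro h
        obtain ⟨x, hx, _⟩ := Set.mem_iUnion.mp h
        exact hx
    have hdisj : Pairwise (Function.onFun Disjoint fun x => C ⁻¹' s ∩ V x) := by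
      intro x x' hxx'
      simp only [Set.disjoint_left]
      rintro ω ⟨_, h1⟩ ⟨_, h2⟩
      exact hxx' (((hVmem ω x).mp h1).symm.trans ((hVmem ω x').mp h2))
    rw [hcover, measure_iUnion hdisj
      (fun x => (hCmeas hs).inter (hVmeas x))]
    refine tsum_congr fun x => ?_
    by_cases hfs : SBAux.fcol x ∈ s
    · rw [if_pos hfs, mul_one, ← hμV x]
      congr 1
      rw [Set.inter_eq_right]
      intro ω hω
      have : XX ω = x := (hVmem ω x).mp hω
      simp only [Set.mem_preimage]
      rw [hCXX]
      simp only [this]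
      exact hfs
    · rw [if_neg hfs, mul_zero]
      convert measure_empty
      · ext ω
        simp only [Set.mem_inter_iff, Set.mem_preimage, Set.mem_empty_iff_false, iff_false,
          not_and]
        intro hωs hωV
        have : XX ω = x := (hVmem ω x).mp hωV
        apply hfs
        rw [hCXX] at hωs
        simp only [Set.mem_preimage] at hωs
        rwa [this] at hωs
      · exact inferInstance
  -- (4) the mean
  set m' : ℝ≥0∞ := ∑' x : Fin b → ℕ, SBAux.Pp p x * (SBAux.fcol x : ℝ≥0∞) with hm'def
  have hCle : ∀ ω, (C ω : ℝ) ≤ (b : ℝ) := by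
    intro ω
    have : C ω ≤ b := by rw [hC ω]; omega
    exact_mod_cast this
  have hint : Integrable (fun ω => (C ω : ℝ)) μ := by
    refine Integrable.mono' (integrable_const (b : ℝ))
      (((measurable_of_countable (fun k : ℕ => (k : ℝ))).comp hCmeas).aestronglyMeasurable)
      (ae_of_all μ fun ω => ?_)
    rw [Real.norm_eq_abs, abs_of_nonneg (Nat.cast_nonneg _)]
    exact hCle ω
  have MEAN : ENNReal.ofReal m = m' := by
    rw [hm, ofReal_integral_eq_lintegral_ofReal hint (ae_of_all μ fun ω => Nat.cast_nonneg _)]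
    have h1 : ∫⁻ ω, ENNReal.ofReal ((C ω : ℝ)) ∂μ = ∫⁻ ω, (C ω : ℝ≥0∞) ∂μ := by
      refine lintegral_congr fun ω => ?_
      exact ENNReal.ofReal_natCast (C ω)
    rw [h1]
    have h2 : ∫⁻ ω, (C ω : ℝ≥0∞) ∂μ = ∫⁻ k, (k : ℝ≥0∞) ∂(μ.map C) :=
      (lintegral_map (measurable_of_countable _) hCmeas).symm
    rw [h2, lintegral_countable' (fun k : ℕ => (k : ℝ≥0∞))]
    calc ∑' k : ℕ, (k : ℝ≥0∞) * (μ.map C) {k}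
        = ∑' (k : ℕ) (x : Fin b → ℕ), SBAux.Pp p x *
            (if SBAux.fcol x = k then (k : ℝ≥0∞) else 0) := by
          refine tsum_congr fun k => ?_
          rw [LAWC {k}, ← ENNReal.tsum_mul_left]
          refine tsum_congr fun x => ?_
          by_cases h : SBAux.fcol x = k
          · rw [if_pos (Set.mem_singleton_iff.mpr h), if_pos h, mul_one]
            ring
          · rw [if_neg (fun hh => h (Set.mem_singleton_iff.mp hh)), if_neg h, mul_zero,
              mul_zero]
      _ = ∑' (x : Fin b → ℕ) (k : ℕ), SBAux.Pp p x *
            (if SBAux.fcol x = k then (k : ℝ≥0∞) else 0) := ENNReal.tsum_comm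
      _ = m' := by
          refine tsum_congr fun x => ?_
          rw [tsum_eq_single (SBAux.fcol x) (fun k hk => by
            rw [if_neg (fun hh => hk hh.symm), mul_zero])]
          rw [if_pos rfl]
  have hm'ne : m' ≠ 0 := by
    rw [← MEAN]
    simp only [ne_eq, ENNReal.ofReal_eq_zero, not_le]
    exact hmpos
  have hm'top : m' ≠ ⊤ := by rw [← MEAN]; exact ENNReal.ofReal_ne_top
  have hWm : SBAux.Wq p = m' := SBAux.W_eq_m hp
  -- (5) the coupling measure
  set ν : Measure (ℕ × ℕ) := Measure.sum
    (fun z : (Fin b → ℕ) × (Fin b → ℕ) =>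
      (m'⁻¹ * SBAux.Lam p z.1 z.2) • Measure.dirac (SBAux.fcol z.1, SBAux.fcol z.2)) with hνdef
  have hνapp : ∀ s : Set (ℕ × ℕ), ν s = ∑' z : (Fin b → ℕ) × (Fin b → ℕ),
      (m'⁻¹ * SBAux.Lam p z.1 z.2) *
        (if (SBAux.fcol z.1, SBAux.fcol z.2) ∈ s then 1 else 0) := by
    intro s
    have hs : MeasurableSet s := s.to_countable.measurableSet
    rw [hνdef, Measure.sum_apply _ hs]
    refine tsum_congr fun z => ?_
    rw [Measure.smul_apply, Measure.dirac_apply' _ hs]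
    by_cases h : (SBAux.fcol z.1, SBAux.fcol z.2) ∈ s
    · rw [if_pos h, Set.indicator_of_mem h]
      simp
    · rw [if_neg h, Set.indicator_of_notMem h]
      simp
  refine ⟨ν, ?_, ?_, ?_, ?_⟩
  · -- probability measure
    constructor
    rw [hνapp Set.univ]
    simp only [Set.mem_univ, if_pos, mul_one]
    rw [ENNReal.tsum_prod']
    calc ∑' (x : Fin b → ℕ) (y : Fin b → ℕ), m'⁻¹ * SBAux.Lam p x y
        = ∑' (x : Fin b → ℕ), m'⁻¹ * (SBAux.Pp p x * SBAux.Wq p) := by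
          refine tsum_congr fun x => ?_
          rw [ENNReal.tsum_mul_left, SBAux.lam_first hp x]
      _ = m'⁻¹ * SBAux.Wq p * ∑' (x : Fin b → ℕ), SBAux.Pp p x := by
          rw [← ENNReal.tsum_mul_left]
          exact tsum_congr fun x => by ring
      _ = 1 := by
          rw [SBAux.TOT hp, mul_one, hWm, ENNReal.inv_mul_cancel hm'ne hm'top]
  · -- first marginal
    refine Measure.ext fun s hs => ?_
    rw [Measure.map_apply measurable_fst hs, hνapp (Prod.fst ⁻¹' s), LAWC s,
      ENNReal.tsum_prod']
    refine tsum_congr fun x => ?_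
    have hrw : ∀ y : Fin b → ℕ, (m'⁻¹ * SBAux.Lam p x y) *
        (if (SBAux.fcol x, SBAux.fcol y) ∈ Prod.fst ⁻¹' s then 1 else 0)
        = (m'⁻¹ * (if SBAux.fcol x ∈ s then (1:ℝ≥0∞) else 0)) * SBAux.Lam p x y := by
      intro y
      by_cases h : SBAux.fcol x ∈ s
      · rw [if_pos (show (SBAux.fcol x, SBAux.fcol y) ∈ Prod.fst ⁻¹' s from h), if_pos h]
        ring
      · rw [if_neg (show (SBAux.fcol x, SBAux.fcol y) ∉ Prod.fst ⁻¹' s from h), if_neg h]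
        ring
    rw [tsum_congr hrw, ENNReal.tsum_mul_left, SBAux.lam_first hp x, hWm]
    by_cases h : SBAux.fcol x ∈ s
    · simp only [h, if_true]
      calc m'⁻¹ * 1 * (SBAux.Pp p x * m') = SBAux.Pp p x * (m'⁻¹ * m') := by ring
        _ = SBAux.Pp p x * 1 := by rw [ENNReal.inv_mul_cancel hm'ne hm'top]
    · simp only [h, if_false]
      ring
  · -- second marginal
    refine Measure.ext fun s hs => ?_
    rw [Measure.map_apply measurable_snd hs, hνapp (Prod.snd ⁻¹' s)]
    have hRHS : sizeBiased (Measure.map C μ) m s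
        = ∑' k : ℕ, ((k : ℝ≥0∞) * (Measure.map C μ) {k} / ENNReal.ofReal m) *
            (if k ∈ s then 1 else 0) := by
      rw [sizeBiased, Measure.sum_apply _ hs]
      refine tsum_congr fun k => ?_
      rw [Measure.smul_apply, Measure.dirac_apply' _ hs]
      by_cases h : k ∈ s
      · rw [Set.indicator_of_mem h, if_pos h]; simp
      · rw [Set.indicator_of_notMem h, if_neg h]; simp
    rw [hRHS, ENNReal.tsum_prod', ENNReal.tsum_comm]
    have hLHS : ∀ y : Fin b → ℕ,
        (∑' x : Fin b → ℕ, (m'⁻¹ * SBAux.Lam p x y) *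
          (if (SBAux.fcol x, SBAux.fcol y) ∈ Prod.snd ⁻¹' s then 1 else 0))
        = m'⁻¹ * (SBAux.Pp p y * ((SBAux.fcol y : ℝ≥0∞) *
            (if SBAux.fcol y ∈ s then 1 else 0))) := by
      intro y
      have hrw : ∀ x : Fin b → ℕ, (m'⁻¹ * SBAux.Lam p x y) *
          (if (SBAux.fcol x, SBAux.fcol y) ∈ Prod.snd ⁻¹' s then 1 else 0)
          = (m'⁻¹ * (if SBAux.fcol y ∈ s then (1:ℝ≥0∞) else 0)) * SBAux.Lam p x y := by
        intro x
        by_cases h : SBAux.fcol y ∈ s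
        · rw [if_pos (show (SBAux.fcol x, SBAux.fcol y) ∈ Prod.snd ⁻¹' s from h), if_pos h]
          ring
        · rw [if_neg (show (SBAux.fcol x, SBAux.fcol y) ∉ Prod.snd ⁻¹' s from h), if_neg h]
          ring
      rw [tsum_congr hrw, ENNReal.tsum_mul_left, SBAux.lam_second hp y]
      ring
    rw [tsum_congr hLHS]
    have hkey : ∀ k : ℕ, ((k : ℝ≥0∞) * (Measure.map C μ) {k} / ENNReal.ofReal m) *
        (if k ∈ s then 1 else 0)
        = ∑' y : Fin b → ℕ, m'⁻¹ * (SBAux.Pp p y *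
            (if SBAux.fcol y = k then (k : ℝ≥0∞) * (if k ∈ s then 1 else 0) else 0)) := by
      intro k
      have LAWCk : (Measure.map C μ) {k}
          = ∑' y : Fin b → ℕ, SBAux.Pp p y * (if SBAux.fcol y = k then 1 else 0) := by
        rw [LAWC {k}]
        refine tsum_congr fun y => ?_
        congr 1
        by_cases h : SBAux.fcol y = k
        · rw [if_pos (show SBAux.fcol y ∈ ({k} : Set ℕ) from h), if_pos h]
        · rw [if_neg (show SBAux.fcol y ∉ ({k} : Set ℕ) from h), if_neg h]
      have hstep : ∀ y : Fin b → ℕ, m'⁻¹ * (SBAux.Pp p y *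
          (if SBAux.fcol y = k then (k : ℝ≥0∞) * (if k ∈ s then 1 else 0) else 0))
          = (m'⁻¹ * ((k : ℝ≥0∞) * (if k ∈ s then 1 else 0))) *
              (SBAux.Pp p y * (if SBAux.fcol y = k then 1 else 0)) := by
        intro y
        by_cases h : SBAux.fcol y = k
        · rw [if_pos h, if_pos h]
          ring
        · rw [if_neg h, if_neg h, mul_zero, mul_zero, mul_zero]
      rw [LAWCk, MEAN, div_eq_mul_inv, tsum_congr hstep,
        ENNReal.tsum_mul_left (a := m'⁻¹ * ((k : ℝ≥0∞) * (if k ∈ s then 1 else 0)))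
          (f := fun y => SBAux.Pp p y * (if SBAux.fcol y = k then 1 else 0))]
      ring
    rw [tsum_congr hkey, ENNReal.tsum_comm]
    refine tsum_congr fun y => ?_
    rw [tsum_eq_single (SBAux.fcol y) (fun k hk => by
      rw [if_neg (fun hh => hk hh.symm), mul_zero, mul_zero])]
    rw [if_pos rfl]
  · -- support
    rw [hνapp _]
    rw [ENNReal.tsum_eq_zero]
    intro z
    by_cases h : SBAux.Lam p z.1 z.2 = 0
    · rw [h, mul_zero, zero_mul]
    · have hmem := SBAux.lam_support (p := p) h
      have hnot : (SBAux.fcol z.1, SBAux.fcol z.2) ∉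
          {q : ℕ × ℕ | ((q.2 : ℤ) - (q.1 : ℤ)) ∉ ({-1, 0, 1, 2} : Set ℤ)} := by
        intro hq
        exact hq hmem
      rw [if_neg hnot, mul_zero]
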